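/- Let 𝒜 be an epireflective class of topological spaces. Let X, Y, Z ∈ 𝒜, let b ∈ Y be a non-isolated point such that {b} is closed in Y, and assume that the property P(b,Y,Z) holds. Then the space X△_bY belongs to 𝒜. -/

import Mathlib

open Topology

universe u v w

/-- A class of topological spaces (underlying types in a fixed universe). -/
def SpaceClass : Type (u + 1) :=
  ∀ (X : Type u), TopologicalSpace X → Prop

/-- Closedness under homeomorphic copies. -/
def ClosedUnderHomeo (ℬ : SpaceClass.{u}) : Prop :=
  ∀ (X Y : Type u) (tX : TopologicalSpace X) (tY : TopologicalSpace Y),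
    Nonempty (@Homeomorph X Y tX tY) → ℬ X tX → ℬ Y tY

/-- An epireflective class: closed under homeomorphic copies, subspaces and
set-indexed topological products. -/
structure IsEpireflectiveClass (𝒜 : SpaceClass.{u}) : Prop where
  homeo : ClosedUnderHomeo 𝒜
  subspace : ∀ (X : Type u) (tX : TopologicalSpace X) (s : Set X),
    𝒜 X tX → 𝒜 s (TopologicalSpace.induced (Subtype.val : s → X) tX)
  prod : ∀ (ι : Type u) (Y : ι → Type u) (t : ∀ i, TopologicalSpace (Y i)),
    (∀ i, 𝒜 (Y i) (t i)) → 𝒜 (∀ i, Y i) (@Pi.topologicalSpace ι Y t)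

/-- The disjoint-union (topological sum) topology on a sigma type. -/
def sigmaTop {ι : Type v} (Y : ι → Type w) (t : ∀ i, TopologicalSpace (Y i)) :
    TopologicalSpace (Σ i, Y i) :=
  ⨆ i, TopologicalSpace.coinduced (Sigma.mk i) (t i)

/-- An AD-class in `𝒜`: a subclass of `𝒜` closed under homeomorphic copies, closed
under topological sums of arbitrary families of its members, and divisible in `𝒜`
(quotients in `𝒜` of members of `ℬ` belong to `ℬ`). -/
structure IsADClass (𝒜 ℬ : SpaceClass.{u}) : Prop where
  subset : ∀ (X : Type u) (tX : TopologicalSpace X), ℬ X tX → 𝒜 X tX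
  homeo : ClosedUnderHomeo ℬ
  sums : ∀ (ι : Type u) (Y : ι → Type u) (t : ∀ i, TopologicalSpace (Y i)),
    (∀ i, ℬ (Y i) (t i)) → ℬ (Σ i, Y i) (sigmaTop Y t)
  divisible : ∀ (X Z : Type u) (tX : TopologicalSpace X) (tZ : TopologicalSpace Z)
    (q : X → Z), ℬ X tX → 𝒜 Z tZ → @IsQuotientMap X Z tX tZ q → ℬ Z tZ

/-- A class is hereditary if every nonempty subspace of each member belongs to it. -/
def IsHereditary (ℬ : SpaceClass.{u}) : Prop :=
  ∀ (X : Type u) (tX : TopologicalSpace X) (s : Set X), s.Nonempty → ℬ X tX →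
    ℬ s (TopologicalSpace.induced (Subtype.val : s → X) tX)

/-- The prime factor `X_a`: the topology on the underlying set of `X` whose open sets
are exactly the sets `U` such that `a ∈ U` implies `U` is a neighbourhood of `a`. -/
def primeFactor {X : Type u} (t : TopologicalSpace X) (a : X) : TopologicalSpace X where
  IsOpen U := a ∈ U → U ∈ @nhds X t a
  isOpen_univ := fun _ => Filter.univ_mem
  isOpen_inter := fun U V hU hV h => Filter.inter_mem (hU h.1) (hV h.2)
  isOpen_sUnion := fun S hS h => by
    obtain ⟨U, hU, haU⟩ := h
    exact Filter.mem_of_superset (hS U hU haU) (Set.subset_sUnion_of_mem hU)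

/-- A prime space: a topological space with exactly one non-isolated point. -/
def IsPrimeSpace (X : Type u) (t : TopologicalSpace X) : Prop :=
  ∃! a : X, ¬ @IsOpen X t {a}

/-- The space `X △_b Y`: the final topology on `X × Y` with respect to the maps
`f : x ↦ (x, b)` and `g_a : y ↦ (a, y)`, one for each `a ∈ X`. -/
def triangleTop {X Y : Type u} (tX : TopologicalSpace X) (tY : TopologicalSpace Y)
    (b : Y) : TopologicalSpace (X × Y) :=
  TopologicalSpace.coinduced (fun x : X => (x, b)) tX ⊔
    ⨆ a : X, TopologicalSpace.coinduced (fun y : Y => (a, y)) tY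

/-- The property `P(b, Y, Z)`: there are a family `B` of open neighbourhoods of `b`
forming a neighbourhood base at `b`, a point `a ∈ Z` and an open neighbourhood `U₀`
of `a` such that every `V ∈ B` is the preimage of `U₀` under some continuous
`f : Y → Z` with `f b = a`. -/
def PropP {Y Z : Type u} (tY : TopologicalSpace Y) (tZ : TopologicalSpace Z) (b : Y) :
    Prop :=
  ∃ (B : Set (Set Y)) (a : Z) (U₀ : Set Z),
    (∀ V ∈ B, @IsOpen Y tY V ∧ b ∈ V) ∧
    (∀ W ∈ @nhds Y tY b, ∃ V ∈ B, V ⊆ W) ∧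
    @IsOpen Z tZ U₀ ∧ a ∈ U₀ ∧
    (∀ V ∈ B, ∃ f : Y → Z, @Continuous Y Z tY tZ f ∧ f b = a ∧ f ⁻¹' U₀ = V)

section Aux3

open Classical in
/-- Index type for the product used in the proof of Statement 3. -/
def S3Idx (X Y : Type u) : Type u := PUnit.{u + 1} ⊕ X ⊕ (X → Set Y)

/-- Family of factor spaces. -/
def S3Fam (X Y Z : Type u) : S3Idx X Y → Type u
  | Sum.inl _ => X
  | Sum.inr (Sum.inl _) => Y
  | Sum.inr (Sum.inr _) => Z

/-- Topologies on the factors. -/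
def S3TopFam {X Y Z : Type u} (tX : TopologicalSpace X) (tY : TopologicalSpace Y)
    (tZ : TopologicalSpace Z) : ∀ i : S3Idx X Y, TopologicalSpace (S3Fam X Y Z i)
  | Sum.inl _ => tX
  | Sum.inr (Sum.inl _) => tY
  | Sum.inr (Sum.inr _) => tZ

open Classical in
/-- The map from `X × Y` into the product. -/
noncomputable def S3Map {X Y Z : Type u} (b : Y) (g : Set Y → Y → Z) (p : X × Y) :
    ∀ i : S3Idx X Y, S3Fam X Y Z i
  | Sum.inl _ => p.1
  | Sum.inr (Sum.inl x₀) => if p.1 = x₀ then p.2 else b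
  | Sum.inr (Sum.inr 𝒱) => g (𝒱 p.1) p.2

end Aux3

/-- If `X, Y, Z` belong to an epireflective class `𝒜`, `b ∈ Y` is a
non-isolated point with `{b}` closed, and `P(b,Y,Z)` holds, then `X △_b Y ∈ 𝒜`. -/
theorem statement3 (𝒜 : SpaceClass.{u}) (hA : IsEpireflectiveClass 𝒜)
    (X Y Z : Type u) (tX : TopologicalSpace X) (tY : TopologicalSpace Y)
    (tZ : TopologicalSpace Z)
    (hX : 𝒜 X tX) (hY : 𝒜 Y tY) (hZ : 𝒜 Z tZ)
    (b : Y) (hb_niso : ¬ @IsOpen Y tY {b}) (hb_cl : @IsClosed Y tY {b})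
    (hP : PropP tY tZ b) :
    𝒜 (X × Y) (triangleTop tX tY b) := by
  classical
  obtain ⟨B, a₀, U₀, hBopen, hBbase, hU₀open, ha₀, hBf⟩ := hP
  obtain ⟨V₀, hV₀B, -⟩ := hBbase Set.univ Filter.univ_mem
  letI := tX; letI := tY; letI := tZ
  choose F hFc hFb hFpre using hBf
  set g : Set Y → Y → Z := fun V => if h : V ∈ B then F V h else fun _ => a₀ with hgdef
  have hgc : ∀ V, Continuous (g V) := by
    intro V
    by_cases h : V ∈ B
    · simpa [hgdef, h] using hFc V h
    · simpa [hgdef, h] using (continuous_const : Continuous fun _ : Y => a₀)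
  have hgb : ∀ V, g V b = a₀ := by
    intro V
    by_cases h : V ∈ B <;> simp [hgdef, h]
    exact hFb V h
  have hgpre : ∀ V ∈ B, g V ⁻¹' U₀ = V := by
    intro V h
    simp only [hgdef, dif_pos h]
    exact hFpre V h
  letI tF : ∀ i : S3Idx X Y, TopologicalSpace (S3Fam X Y Z i) := S3TopFam tX tY tZ
  letI tT : TopologicalSpace (X × Y) := triangleTop tX tY b
  letI tP : TopologicalSpace (∀ i : S3Idx X Y, S3Fam X Y Z i) := Pi.topologicalSpace
  -- characterisation of open sets of the triangle topology
  have hopen : ∀ S : Set (X × Y), IsOpen[tT] S ↔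
      (IsOpen[tX] {x | (x, b) ∈ S} ∧ ∀ x : X, IsOpen[tY] {y | (x, y) ∈ S}) := by
    intro S
    constructor
    · intro h
      have h' : IsOpen[TopologicalSpace.coinduced (fun x : X => (x, b)) tX] S ∧
          IsOpen[⨆ a : X, TopologicalSpace.coinduced (fun y : Y => (a, y)) tY] S :=
        isOpen_sup.mp h
      exact ⟨isOpen_coinduced.mp h'.1,
        fun x => isOpen_coinduced.mp (isOpen_iSup_iff.mp h'.2 x)⟩
    · rintro ⟨h1, h2⟩
      exact isOpen_sup.mpr ⟨isOpen_coinduced.mpr h1,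
        isOpen_iSup_iff.mpr fun x => isOpen_coinduced.mpr (h2 x)⟩
  -- continuity criterion for maps out of the triangle topology
  have key : ∀ (W : Type u) (tW : TopologicalSpace W) (h : X × Y → W),
      @Continuous X W tX tW (fun x => h (x, b)) →
      (∀ x, @Continuous Y W tY tW fun y => h (x, y)) →
      @Continuous (X × Y) W tT tW h := by
    intro W tW h h1 h2
    rw [continuous_def]
    intro O hO
    rw [hopen]
    exact ⟨h1.isOpen_preimage O hO, fun x => (h2 x).isOpen_preimage O hO⟩
  -- continuity of the map into the product
  have he : @Continuous (X × Y) _ tT tP (S3Map b g) := by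
    apply continuous_pi
    intro i
    rcases i with u | x₀ | 𝒱
    · refine key X tX _ ?_ ?_
      · exact @continuous_id X tX
      · intro x; simpa [S3Map] using (continuous_const : Continuous fun _ : Y => x)
    · refine key Y tY (fun p => S3Map b g p (Sum.inr (Sum.inl x₀))) ?_ ?_
      · have : (fun x : X => S3Map b g (x, b) (Sum.inr (Sum.inl x₀))) = fun _ => b := by
          funext x; simp [S3Map]; exact ite_self _
        rw [this]; exact continuous_const
      · intro x
        by_cases hx : x = x₀
        · have : (fun y : Y => S3Map b g (x, y) (Sum.inr (Sum.inl x₀))) = fun y => y := by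
            funext y; simp [S3Map, hx]; rfl
          rw [this]; exact continuous_id
        · have : (fun y : Y => S3Map b g (x, y) (Sum.inr (Sum.inl x₀))) = fun _ => b := by
            funext y; simp [S3Map, hx]; rfl
          rw [this]; exact continuous_const
    · refine key Z tZ (fun p => S3Map b g p (Sum.inr (Sum.inr 𝒱))) ?_ ?_
      · have : (fun x : X => S3Map b g (x, b) (Sum.inr (Sum.inr 𝒱))) = fun _ => a₀ := by
          funext x; simp [S3Map, hgb]; rfl
        rw [this]; exact continuous_const
      · intro x
        have : (fun y : Y => S3Map b g (x, y) (Sum.inr (Sum.inr 𝒱))) = g (𝒱 x) := by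
          funext y; simp [S3Map]; rfl
        rw [this]; exact hgc (𝒱 x)
  -- injectivity
  have hinj : Function.Injective (S3Map b g (X := X)) := by
    intro p q hpq
    have h1 : p.1 = q.1 := by
      have := congrFun hpq (Sum.inl PUnit.unit)
      exact this
    have h2 : p.2 = q.2 := by
      have := congrFun hpq (Sum.inr (Sum.inl p.1))
      simp [S3Map, h1] at this; exact this
    exact Prod.ext h1 h2
  -- every triangle-open set is induced-open
  have hkey2 : ∀ S : Set (X × Y), IsOpen[tT] S →
      IsOpen[TopologicalSpace.induced (S3Map b g) tP] S := by
    intro S hS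
    obtain ⟨hSb, hSx⟩ := (hopen S).mp hS
    have step : ∀ p ∈ S, ∃ O : Set (∀ i : S3Idx X Y, S3Fam X Y Z i),
        IsOpen[tP] O ∧ S3Map b g p ∈ O ∧ S3Map b g ⁻¹' O ⊆ S := by
      rintro ⟨x, y⟩ hp
      by_cases hy : y = b
      · rw [hy] at hp
        -- choose suitable basic neighbourhoods
        have hch : ∀ x' : X, ∃ V, V ∈ B ∧ ((x', b) ∈ S → V ⊆ {y | (x', y) ∈ S}) := by
          intro x'
          by_cases h : (x', b) ∈ S
          · obtain ⟨V, hVB, hVs⟩ := hBbase {y | (x', y) ∈ S} ((hSx x').mem_nhds h)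
            exact ⟨V, hVB, fun _ => hVs⟩
          · exact ⟨V₀, hV₀B, fun h' => absurd h' h⟩
        choose 𝒱 h𝒱B h𝒱sub using hch
        refine ⟨(fun q => q (Sum.inl PUnit.unit)) ⁻¹' {x' | (x', b) ∈ S} ∩
            (fun q => q (Sum.inr (Sum.inr 𝒱))) ⁻¹' U₀, ?_, ?_, ?_⟩
        · letI : TopologicalSpace (S3Fam X Y Z (Sum.inl PUnit.unit)) := tX
          letI : TopologicalSpace (S3Fam X Y Z (Sum.inr (Sum.inr 𝒱))) := tZ
          exact ((continuous_apply (T := tF) (Sum.inl PUnit.unit)).isOpen_preimage _ hSb).inter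
            ((continuous_apply (T := tF) (Sum.inr (Sum.inr 𝒱))).isOpen_preimage _ hU₀open)
        · constructor
          · show S3Map b g (x, y) (Sum.inl PUnit.unit) ∈ {x' | (x', b) ∈ S}
            exact hp
          · show S3Map b g (x, y) (Sum.inr (Sum.inr 𝒱)) ∈ U₀
            rw [hy]; show g (𝒱 x) b ∈ U₀; rw [hgb]; exact ha₀
        · rintro ⟨x', y'⟩ ⟨hq1, hq2⟩
          have hq1' : (x', b) ∈ S := hq1
          have hq2' : g (𝒱 x') y' ∈ U₀ := hq2
          have : y' ∈ 𝒱 x' := by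
            rw [← hgpre (𝒱 x') (h𝒱B x')]
            exact hq2'
          exact h𝒱sub x' hq1' this
      · refine ⟨(fun q => q (Sum.inr (Sum.inl x))) ⁻¹' ({y' | (x, y') ∈ S} \ {b}),
          ?_, ?_, ?_⟩
        · letI : TopologicalSpace (S3Fam X Y Z (Sum.inr (Sum.inl x))) := tY
          exact (continuous_apply (T := tF) (Sum.inr (Sum.inl x))).isOpen_preimage _
            ((hSx x).sdiff hb_cl)
        · show S3Map b g (x, y) (Sum.inr (Sum.inl x)) ∈ {y' | (x, y') ∈ S} \ {b}
          simpa [S3Map] using ⟨hp, hy⟩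
        · rintro ⟨x', y'⟩ hq
          have hq' : (if x' = x then y' else b) ∈ {y' | (x, y') ∈ S} \ {b} := by
            exact hq
          by_cases hx' : x' = x
          · subst hx'
            simpa using hq'.1
          · rw [if_neg hx'] at hq'
            exact absurd rfl hq'.2
    choose O hOopen hOmem hOsub using step
    rw [isOpen_induced_iff]
    refine ⟨⋃ p : S, O p.1 p.2, isOpen_iUnion fun p => hOopen p.1 p.2, ?_⟩
    ext q
    simp only [Set.mem_preimage, Set.mem_iUnion]
    constructor
    · rintro ⟨⟨p, hpS⟩, hq⟩
      exact hOsub p hpS hq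
    · intro hqS
      exact ⟨⟨q, hqS⟩, hOmem q hqS⟩
  -- the two topologies coincide
  have heq : tT = TopologicalSpace.induced (S3Map b g) tP :=
    le_antisymm (continuous_iff_le_induced.mp he)
      (TopologicalSpace.le_def.mpr fun S hS => hkey2 S hS)
  -- membership of the factors
  have hfam : ∀ i : S3Idx X Y, 𝒜 (S3Fam X Y Z i) (S3TopFam tX tY tZ i) := by
    intro i
    rcases i with u | x₀ | 𝒱
    · exact hX
    · exact hY
    · exact hZ
  have hprod : 𝒜 (∀ i : S3Idx X Y, S3Fam X Y Z i) tP :=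
    hA.prod (S3Idx X Y) (S3Fam X Y Z) (S3TopFam tX tY tZ) hfam
  have hsub : 𝒜 (Set.range (S3Map b g (X := X)))
      (TopologicalSpace.induced Subtype.val tP) :=
    hA.subspace _ tP (Set.range (S3Map b g (X := X))) hprod
  -- the triangle space is homeomorphic to the range
  have hemb : IsEmbedding (S3Map b g (X := X)) := ⟨⟨heq⟩, hinj⟩
  have hhomeo : Nonempty (@Homeomorph (Set.range (S3Map b g (X := X))) (X × Y)
      (TopologicalSpace.induced Subtype.val tP) tT) :=
    ⟨(Topology.IsEmbedding.toHomeomorph hemb).symm⟩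
  exact hA.homeo _ _ _ tT hhomeo hsub
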